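/- Let G be a finite group admitting a colouring bijection σ : G → G. Then the function c : G³ → G defined by c(x,y,z) = x⁻¹·σ(y)·z is a proper colouring of the graph 𝒢₃(G) with |G| colours; that is, whenever (x,y,z) and (x',y',z') are adjacent in 𝒢₃(G), we have c(x,y,z) ≠ c(x',y',z'). -/

import Mathlib

/-- A bijection `σ : G → G` is a *colouring bijection* if the three maps
`x ↦ σ(x)·x`, `x ↦ x⁻¹·σ(x)` and `x ↦ x⁻¹·σ(x)·x` are bijections of `G`. -/
def IsColouringBijection {G : Type*} [Group G] (σ : G → G) : Prop :=
  Function.Bijective σ ∧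
    Function.Bijective (fun x => σ x * x) ∧
    Function.Bijective (fun x => x⁻¹ * σ x) ∧
    Function.Bijective (fun x => x⁻¹ * σ x * x)

/-- The connection set `S₃` of the Cayley graph `𝒢₃(G)`. -/
def connS3 (G : Type*) [Group G] : Set (G × G × G) :=
  {p | ∃ g : G, g ≠ 1 ∧
    (p = (g, 1, 1) ∨ p = (1, g, 1) ∨ p = (1, 1, g) ∨
      p = (g, g, 1) ∨ p = (1, g, g) ∨ p = (g, g, g))}

/-- The Cayley graph `𝒢₃(G) = Cay(G³, S₃)`. -/
def cayley3 (G : Type*) [Group G] : SimpleGraph (G × G × G) where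
  Adj u v := u ≠ v ∧ u * v⁻¹ ∈ connS3 G
  symm := by
    constructor
    rintro u v ⟨hne, g, hg, hc⟩
    refine ⟨hne.symm, g⁻¹, inv_ne_one.mpr hg, ?_⟩
    have key : v * u⁻¹ = (u * v⁻¹)⁻¹ := by group
    rcases hc with h | h | h | h | h | h <;>
      rw [key, h] <;> simp [Prod.ext_iff]
  loopless := by constructor; rintro u ⟨hne, -⟩; exact hne rfl

/-- Proposition 1 (chromatic): if a finite group `G` admits a colouring bijection `σ`,
then `c(x,y,z) = x⁻¹ σ(y) z` is a proper `|G|`-colouring of `𝒢₃(G)`. -/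
theorem colouring_bijection_gives_proper_colouring
    {G : Type*} [Group G] [Fintype G] (σ : G → G)
    (hσ : IsColouringBijection σ) :
    ∀ u v : G × G × G, (cayley3 G).Adj u v →
      u.1⁻¹ * σ u.2.1 * u.2.2 ≠ v.1⁻¹ * σ v.2.1 * v.2.2 := by
  obtain ⟨hσb, hf, hh, hk⟩ := hσ
  have aux : ∀ {g a : G}, a = g⁻¹ * a → g = 1 := by
    intro g a h
    have h1 : g⁻¹ * a = 1 * a := by rw [one_mul]; exact h.symm
    have := mul_right_cancel h1
    simpa using this
  rintro ⟨x, y, z⟩ ⟨x', y', z'⟩ ⟨hne, g, hg, hc⟩ heq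
  simp only [Prod.mk_mul_mk, Prod.inv_mk, Prod.mk.injEq] at hc
  simp only at heq
  apply hg
  rcases hc with ⟨h1, h2, h3⟩ | ⟨h1, h2, h3⟩ | ⟨h1, h2, h3⟩ |
      ⟨h1, h2, h3⟩ | ⟨h1, h2, h3⟩ | ⟨h1, h2, h3⟩
  · -- (g,1,1)
    have hy : y = y' := by rwa [mul_inv_eq_one] at h2
    have hz : z = z' := by rwa [mul_inv_eq_one] at h3
    have hx : x' = g⁻¹ * x := by rw [← h1]; group
    subst hy; subst hz; subst hx
    have e1 := mul_right_cancel heq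
    have e2 := mul_right_cancel e1
    exact aux (inv_injective e2)
  · -- (1,g,1)
    have hx : x = x' := by rwa [mul_inv_eq_one] at h1
    have hz : z = z' := by rwa [mul_inv_eq_one] at h3
    have hy : y' = g⁻¹ * y := by rw [← h2]; group
    subst hx; subst hz; subst hy
    have e1 := mul_right_cancel heq
    have e2 := mul_left_cancel e1
    exact aux (hσb.injective e2)
  · -- (1,1,g)
    have hx : x = x' := by rwa [mul_inv_eq_one] at h1
    have hy : y = y' := by rwa [mul_inv_eq_one] at h2
    have hz : z' = g⁻¹ * z := by rw [← h3]; group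
    subst hx; subst hy; subst hz
    exact aux (mul_left_cancel heq)
  · -- (g,g,1)
    have hz : z = z' := by rwa [mul_inv_eq_one] at h3
    have hx : x' = g⁻¹ * x := by rw [← h1]; group
    have hy : y' = g⁻¹ * y := by rw [← h2]; group
    subst hz; subst hx; subst hy
    have e1 := mul_right_cancel heq
    rw [mul_inv_rev, inv_inv, mul_assoc] at e1
    have e2 := mul_left_cancel e1
    -- e2 : σ y = g * σ (g⁻¹ * y)
    have key : y⁻¹ * σ y = (g⁻¹ * y)⁻¹ * σ (g⁻¹ * y) := by rw [e2]; group
    exact aux (hh.injective key)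
  · -- (1,g,g)
    have hx : x = x' := by rwa [mul_inv_eq_one] at h1
    have hy : y' = g⁻¹ * y := by rw [← h2]; group
    have hz : z' = g⁻¹ * z := by rw [← h3]; group
    subst hx; subst hy; subst hz
    rw [mul_assoc, mul_assoc] at heq
    have e1 := mul_left_cancel heq
    rw [← mul_assoc (σ (g⁻¹ * y))] at e1
    have e2 := mul_right_cancel e1
    -- e2 : σ y = σ (g⁻¹ * y) * g⁻¹
    have key : σ y * y = σ (g⁻¹ * y) * (g⁻¹ * y) := by rw [e2]; group
    exact aux (hf.injective key)
  · -- (g,g,g)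
    have hx : x' = g⁻¹ * x := by rw [← h1]; group
    have hy : y' = g⁻¹ * y := by rw [← h2]; group
    have hz : z' = g⁻¹ * z := by rw [← h3]; group
    subst hx; subst hy; subst hz
    rw [mul_inv_rev, inv_inv, mul_assoc, mul_assoc, mul_assoc] at heq
    have e1 := mul_left_cancel heq
    -- e1 : σ y * z = g * (σ (g⁻¹*y) * (g⁻¹ * z))
    have e2 : σ y = g * σ (g⁻¹ * y) * g⁻¹ := by
      have : σ y * z = (g * σ (g⁻¹ * y) * g⁻¹) * z := by rw [e1]; group
      exact mul_right_cancel this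
    have key : y⁻¹ * σ y * y = (g⁻¹ * y)⁻¹ * σ (g⁻¹ * y) * (g⁻¹ * y) := by
      rw [e2]; group
    exact aux (hk.injective key)
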